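/- Let γ ≥ 1 with γ ∉ ℕ, C ∈ ℝ \ {0}, and define m₊(z,γ) = -C²(2/π) sin(πγ) e^{-iπγ} z^γ for z ∈ ℂ \ [0,∞), where z^γ is defined with branch cut along [0,∞). Then: (i) conj(m₊(z,γ)) = m₊(conj(z),γ) for all z ∈ ℂ \ [0,∞); (ii) for every λ > 0, lim_{ε↓0} Im(m₊(λ + iε, γ)) = C²(2/π) sin²(πγ) λ^γ; (iii) m₊(·,γ) is not a Herglotz function, i.e., it does not map the upper half-plane into itself. -/

import Mathlib

open Filter

/-- The argument of `z` taken in `(0, 2π)` (branch cut along `[0,∞)`). -/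
noncomputable def argCut (z : ℂ) : ℝ :=
  if 0 < Complex.arg z then Complex.arg z else Complex.arg z + 2 * Real.pi

/-- `z^γ = |z|^γ e^{iγ arg z}` with `arg z ∈ (0,2π)` (branch cut along `[0,∞)`). -/
noncomputable def cpowCut (γ : ℝ) (z : ℂ) : ℂ :=
  ((‖z‖ ^ γ : ℝ) : ℂ) * Complex.exp (Complex.I * ((γ * argCut z : ℝ) : ℂ))

/-- The Weyl–Titchmarsh coefficient `m₊(z,γ) = -C²(2/π) sin(πγ) e^{-iπγ} z^γ` of the
strongly singular potential `(γ²-1/4)/x²`. -/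
noncomputable def mPlusSing (C γ : ℝ) (z : ℂ) : ℂ :=
  ((-(C ^ 2) * (2 / Real.pi) * Real.sin (Real.pi * γ) : ℝ) : ℂ) *
    Complex.exp (-Complex.I * ((Real.pi * γ : ℝ) : ℂ)) * cpowCut γ z

lemma mPlusSing_eq (C γ : ℝ) (z : ℂ) :
    mPlusSing C γ z =
      ((-(C ^ 2) * (2 / Real.pi) * Real.sin (Real.pi * γ) * ‖z‖ ^ γ : ℝ) : ℂ) *
        Complex.exp (((γ * argCut z - Real.pi * γ : ℝ) : ℂ) * Complex.I) := by
  unfold mPlusSing cpowCut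
  rw [show Complex.exp (((γ * argCut z - Real.pi * γ : ℝ) : ℂ) * Complex.I)
      = Complex.exp (-Complex.I * ((Real.pi * γ : ℝ) : ℂ)) *
        Complex.exp (Complex.I * ((γ * argCut z : ℝ) : ℂ)) by
    rw [← Complex.exp_add]; congr 1; push_cast; ring]
  push_cast
  ring

lemma mPlusSing_im (C γ : ℝ) (z : ℂ) :
    (mPlusSing C γ z).im =
      -(C ^ 2) * (2 / Real.pi) * Real.sin (Real.pi * γ) * ‖z‖ ^ γ *
        Real.sin (γ * argCut z - Real.pi * γ) := by
  rw [mPlusSing_eq]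
  rw [Complex.exp_mul_I, ← Complex.ofReal_cos, ← Complex.ofReal_sin]
  simp only [Complex.add_im, Complex.ofReal_im, Complex.mul_im, Complex.mul_re, Complex.add_re,
    Complex.I_im, Complex.I_re, Complex.ofReal_re]
  ring

lemma argCut_eq_arg {z : ℂ} (h : 0 < z.im) : argCut z = Complex.arg z := by
  unfold argCut
  rw [if_pos]
  refine lt_of_le_of_ne (Complex.arg_nonneg_iff.2 h.le) ?_
  intro h0
  have := (Complex.arg_eq_zero_iff.mp h0.symm).2
  linarith

lemma argCut_conj {z : ℂ} (h : Complex.arg z ≠ 0) :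
    argCut (starRingEnd ℂ z) = 2 * Real.pi - argCut z := by
  unfold argCut
  rw [Complex.arg_conj]
  have h1 := Complex.neg_pi_lt_arg z
  have h2 := Complex.arg_le_pi z
  have hπ := Real.pi_pos
  by_cases hp : Complex.arg z = Real.pi
  · rw [if_pos hp, if_pos hπ, hp, if_pos hπ]; ring
  · rw [if_neg hp]
    rcases lt_trichotomy (Complex.arg z) 0 with h3 | h3 | h3
    · rw [if_pos (by linarith), if_neg (by linarith)]; ring
    · exact absurd h3 h
    · rw [if_neg (by linarith), if_pos h3]
      have : Complex.arg z < Real.pi := lt_of_le_of_ne h2 hp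
      ring

lemma sin_pi_gamma_ne_zero {γ : ℝ} (hγ : 1 ≤ γ) (hnat : ∀ n : ℕ, γ ≠ n) :
    Real.sin (Real.pi * γ) ≠ 0 := by
  intro hs
  rcases Real.sin_eq_zero_iff.mp hs with ⟨n, hn⟩
  have hπ := Real.pi_pos
  have hγn : γ = n := by
    have := mul_right_cancel₀ (ne_of_gt hπ) (by linarith [hn] : n * Real.pi = γ * Real.pi)
    linarith
  have hn0 : 0 ≤ n := by
    by_contra hlt
    push_neg at hlt
    have : (n : ℝ) < 0 := by exact_mod_cast Int.cast_lt_zero.2 hlt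
    linarith
  exact hnat n.toNat (by rw [hγn]; norm_cast; omega)

/-- For `γ ≥ 1`, `γ ∉ ℕ`, `C ≠ 0`: (i) `m₊` is symmetric under conjugation off
`[0,∞)`; (ii) its boundary imaginary part is `C²(2/π) sin²(πγ) λ^γ` for `λ > 0`;
(iii) `m₊` is not a Herglotz function. -/
theorem mPlusSing_properties (C γ : ℝ) (hγ : 1 ≤ γ) (hnat : ∀ n : ℕ, γ ≠ n)
    (hC : C ≠ 0) :
    (∀ z : ℂ, z ∉ (fun t : ℝ => (t : ℂ)) '' Set.Ici 0 →
      starRingEnd ℂ (mPlusSing C γ z) = mPlusSing C γ (starRingEnd ℂ z)) ∧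
    (∀ l : ℝ, 0 < l →
      Tendsto (fun ε : ℝ => (mPlusSing C γ ((l : ℂ) + ε * Complex.I)).im)
        (nhdsWithin 0 (Set.Ioi 0))
        (nhds (C ^ 2 * (2 / Real.pi) * Real.sin (Real.pi * γ) ^ 2 * l ^ γ))) ∧
    ¬ (∀ z : ℂ, 0 < z.im → 0 < (mPlusSing C γ z).im) := by
  have hπ := Real.pi_pos
  refine ⟨?_, ?_, ?_⟩
  · -- (i)
    intro z hz
    have harg : Complex.arg z ≠ 0 := by
      intro h0
      rcases Complex.arg_eq_zero_iff.mp h0 with ⟨hre, him⟩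
      exact hz ⟨z.re, hre, (Complex.ext (by simp) (by simp [him])).symm⟩
    rw [mPlusSing_eq, mPlusSing_eq, map_mul, ← Complex.exp_conj]
    congr 1
    · rw [Complex.conj_ofReal, Complex.norm_conj]
    · rw [map_mul, Complex.conj_ofReal, Complex.conj_I, argCut_conj harg]
      push_cast
      ring
  · -- (ii)
    intro l hl
    have hz : Tendsto (fun ε : ℝ => (l : ℂ) + ε * Complex.I)
        (nhdsWithin 0 (Set.Ioi 0)) (nhds (l : ℂ)) := by
      have : Tendsto (fun ε : ℝ => (l : ℂ) + ε * Complex.I) (nhds 0)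
          (nhds ((l : ℂ) + (0 : ℝ) * Complex.I)) := by
        exact (continuous_const.add ((Complex.continuous_ofReal).mul continuous_const)).tendsto 0
      simpa using this.mono_left nhdsWithin_le_nhds
    have harg : Tendsto (fun ε : ℝ => Complex.arg ((l : ℂ) + ε * Complex.I))
        (nhdsWithin 0 (Set.Ioi 0)) (nhds 0) := by
      have hc : ContinuousAt Complex.arg (l : ℂ) :=
        Complex.continuousAt_arg (by simp [Complex.mem_slitPlane_iff, hl])
      have := hc.tendsto.comp hz
      simpa [Function.comp_def, Complex.arg_ofReal_of_nonneg hl.le] using this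
    have habs : Tendsto (fun ε : ℝ => ‖(l : ℂ) + ε * Complex.I‖ ^ γ)
        (nhdsWithin 0 (Set.Ioi 0)) (nhds (l ^ γ)) := by
      have : Tendsto (fun ε : ℝ => ‖(l : ℂ) + ε * Complex.I‖)
          (nhdsWithin 0 (Set.Ioi 0)) (nhds l) := by
        have := (continuous_norm.tendsto (l : ℂ)).comp hz
        simpa [Function.comp_def, Complex.norm_real, abs_of_pos hl] using this
      exact this.rpow_const (Or.inl hl.ne')
    have hsin : Tendsto (fun ε : ℝ =>
        Real.sin (γ * Complex.arg ((l : ℂ) + ε * Complex.I) - Real.pi * γ))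
        (nhdsWithin 0 (Set.Ioi 0)) (nhds (Real.sin (γ * 0 - Real.pi * γ))) :=
      (Real.continuous_sin.tendsto _).comp
        (((harg.const_mul γ).sub tendsto_const_nhds).congr (fun _ => rfl))
    have key := (tendsto_const_nhds (x := -(C ^ 2) * (2 / Real.pi) *
        Real.sin (Real.pi * γ))).mul habs |>.mul hsin
    have heq : (fun ε : ℝ => (mPlusSing C γ ((l : ℂ) + ε * Complex.I)).im) =ᶠ[nhdsWithin 0 (Set.Ioi 0)]
        (fun ε : ℝ => -(C ^ 2) * (2 / Real.pi) * Real.sin (Real.pi * γ) *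
          ‖(l : ℂ) + ε * Complex.I‖ ^ γ *
          Real.sin (γ * Complex.arg ((l : ℂ) + ε * Complex.I) - Real.pi * γ)) := by
      filter_upwards [self_mem_nhdsWithin] with ε hε
      rw [mPlusSing_im, argCut_eq_arg (by simpa using hε)]
    have hval : -(C ^ 2) * (2 / Real.pi) * Real.sin (Real.pi * γ) * l ^ γ *
        Real.sin (γ * 0 - Real.pi * γ) =
        C ^ 2 * (2 / Real.pi) * Real.sin (Real.pi * γ) ^ 2 * l ^ γ := by
      rw [show γ * 0 - Real.pi * γ = -(Real.pi * γ) by ring, Real.sin_neg]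
      ring
    rw [← hval]
    exact key.congr' heq.symm
  · -- (iii)
    intro h
    have hγ1 : 1 < γ := lt_of_le_of_ne hγ (fun he => hnat 1 (by simp [← he]))
    set t := Real.pi / γ with ht
    have hγ0 : (0 : ℝ) < γ := by linarith
    have ht0 : 0 < t := div_pos hπ hγ0
    have htπ : t < Real.pi := by
      rw [ht, div_lt_iff₀ hγ0]
      nlinarith
    set z₀ : ℂ := Complex.cos t + Complex.sin t * Complex.I with hz₀
    have hargz : Complex.arg z₀ = t := Complex.arg_cos_add_sin_mul_I ⟨by linarith, htπ.le⟩
    have habsz : ‖z₀‖ = 1 := Complex.norm_cos_add_sin_mul_I t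
    have himz : z₀.im = Real.sin t := by
      simp [hz₀, Complex.sin_ofReal_re]
    have hsint : 0 < Real.sin t := Real.sin_pos_of_pos_of_lt_pi ht0 htπ
    have hpos := h z₀ (by rw [himz]; exact hsint)
    have hcut : argCut z₀ = t := by rw [argCut_eq_arg (by rw [himz]; exact hsint), hargz]
    have hγt : γ * t = Real.pi := by
      rw [ht, mul_div_cancel₀ _ (ne_of_gt hγ0)]
    have him : (mPlusSing C γ z₀).im = -(C ^ 2) * (2 / Real.pi) * Real.sin (Real.pi * γ) ^ 2 := by
      rw [mPlusSing_im, hcut, habsz, hγt, Real.one_rpow,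
        show Real.pi - Real.pi * γ = Real.pi - Real.pi * γ from rfl, Real.sin_pi_sub]
      ring
    have hneg : (mPlusSing C γ z₀).im < 0 := by
      rw [him]
      have hC2 : 0 < C ^ 2 := by positivity
      have hs2 : 0 < Real.sin (Real.pi * γ) ^ 2 :=
        pow_pos (abs_pos.mpr (sin_pi_gamma_ne_zero hγ hnat)) 2 |>.trans_le (sq_abs _).le
      have h2π : 0 < 2 / Real.pi := div_pos (by norm_num) hπ
      nlinarith [mul_pos (mul_pos hC2 h2π) hs2]
    linarith
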